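/- Let H be a complex Hilbert space and let B, M₀, M₁ be bounded self-adjoint operators on H such that M₀² + M₁² = 1 (the identity operator). Let λ ≥ 0 satisfy ‖MᵢB − BMᵢ‖ ≤ λ for i = 0, 1, and let m ≥ 0 be such that ‖B(Mᵢu)‖² ≥ m‖Mᵢu‖² for every u ∈ H and i = 0, 1. Then ‖Bu‖ ≥ (√(m + 2λ²) − 2λ)·‖u‖ for every u ∈ H. -/
import Mathlib
set_option maxHeartbeats 1000000

open scoped InnerProductSpace

private lemma part_norm_sq {H : Type*} [NormedAddCommGroup H] [InnerProductSpace ℂ H]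
    [CompleteSpace H] (M₀ M₁ : H →L[ℂ] H)
    (hM₀ : IsSelfAdjoint M₀) (hM₁ : IsSelfAdjoint M₁)
    (hpart : M₀ ^ 2 + M₁ ^ 2 = 1) (v : H) :
    ‖M₀ v‖ ^ 2 + ‖M₁ v‖ ^ 2 = ‖v‖ ^ 2 := by
  have s₀ := ContinuousLinearMap.isSelfAdjoint_iff_isSymmetric.mp hM₀
  have s₁ := ContinuousLinearMap.isSelfAdjoint_iff_isSymmetric.mp hM₁
  have hv : M₀ (M₀ v) + M₁ (M₁ v) = v := by
    have := congrArg (fun T : H →L[ℂ] H => T v) hpart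
    simpa [pow_two, ContinuousLinearMap.mul_apply] using this
  have h1 : (⟪M₀ (M₀ v), v⟫_ℂ + ⟪M₁ (M₁ v), v⟫_ℂ) = ⟪v, v⟫_ℂ := by
    rw [← inner_add_left, hv]
  have e₀ : ⟪M₀ (M₀ v), v⟫_ℂ = ⟪M₀ v, M₀ v⟫_ℂ := s₀ (M₀ v) v
  have e₁ : ⟪M₁ (M₁ v), v⟫_ℂ = ⟪M₁ v, M₁ v⟫_ℂ := s₁ (M₁ v) v
  rw [e₀, e₁] at h1
  have h2 := congrArg (RCLike.re (K := ℂ)) h1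
  rw [map_add] at h2
  rw [inner_self_eq_norm_sq, inner_self_eq_norm_sq, inner_self_eq_norm_sq] at h2
  exact h2

/-- Gluing estimate: if `M₀² + M₁² = 1` is a partition of unity of self-adjoint
operators almost commuting with a self-adjoint operator `B`
(`‖[Mᵢ, B]‖ ≤ λ`), and `B` satisfies the lower bound `‖B(Mᵢu)‖² ≥ m‖Mᵢu‖²`
on the range of each `Mᵢ`, then globally `‖Bu‖ ≥ (√(m + 2λ²) − 2λ)‖u‖`. -/
theorem gluing_lower_bound
    {H : Type*} [NormedAddCommGroup H] [InnerProductSpace ℂ H] [CompleteSpace H]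
    (B M₀ M₁ : H →L[ℂ] H)
    (hB : IsSelfAdjoint B) (hM₀ : IsSelfAdjoint M₀) (hM₁ : IsSelfAdjoint M₁)
    (hpart : M₀ ^ 2 + M₁ ^ 2 = 1)
    (lam : ℝ) (hlam : 0 ≤ lam)
    (hcomm₀ : ‖M₀ * B - B * M₀‖ ≤ lam) (hcomm₁ : ‖M₁ * B - B * M₁‖ ≤ lam)
    (m : ℝ) (hm : 0 ≤ m)
    (hlow₀ : ∀ u : H, ‖B (M₀ u)‖ ^ 2 ≥ m * ‖M₀ u‖ ^ 2)
    (hlow₁ : ∀ u : H, ‖B (M₁ u)‖ ^ 2 ≥ m * ‖M₁ u‖ ^ 2) :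
    ∀ u : H, ‖B u‖ ≥ (Real.sqrt (m + 2 * lam ^ 2) - 2 * lam) * ‖u‖ := by
  intro u
  set c := ‖u‖ with hc
  set t := ‖B u‖ with ht
  have hc0 : 0 ≤ c := norm_nonneg _
  have ht0 : 0 ≤ t := norm_nonneg _
  set a₀ := ‖M₀ (B u)‖ with ha₀
  set a₁ := ‖M₁ (B u)‖ with ha₁
  have ha₀0 : 0 ≤ a₀ := norm_nonneg _
  have ha₁0 : 0 ≤ a₁ := norm_nonneg _
  -- commutator bounds
  have key : ∀ (M : H →L[ℂ] H), ‖M * B - B * M‖ ≤ lam →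
      ‖B (M u)‖ ≤ ‖M (B u)‖ + lam * c := by
    intro M hM
    have h1 : B (M u) = M (B u) - (M * B - B * M) u := by
      simp [ContinuousLinearMap.sub_apply, ContinuousLinearMap.mul_apply]
    calc ‖B (M u)‖ = ‖M (B u) - (M * B - B * M) u‖ := by rw [h1]
      _ ≤ ‖M (B u)‖ + ‖(M * B - B * M) u‖ := norm_sub_le _ _
      _ ≤ ‖M (B u)‖ + lam * c := by
          gcongr
          calc ‖(M * B - B * M) u‖ ≤ ‖M * B - B * M‖ * ‖u‖ :=
                (M * B - B * M).le_opNorm u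
            _ ≤ lam * c := by apply mul_le_mul_of_nonneg_right hM hc0
  have hb₀ : ‖B (M₀ u)‖ ≤ a₀ + lam * c := key M₀ hcomm₀
  have hb₁ : ‖B (M₁ u)‖ ≤ a₁ + lam * c := key M₁ hcomm₁
  have hpu : ‖M₀ u‖ ^ 2 + ‖M₁ u‖ ^ 2 = c ^ 2 := part_norm_sq M₀ M₁ hM₀ hM₁ hpart u
  have hpBu : a₀ ^ 2 + a₁ ^ 2 = t ^ 2 := part_norm_sq M₀ M₁ hM₀ hM₁ hpart (B u)
  -- m c² ≤ (a₀ + λc)² + (a₁ + λc)²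
  have hmc : m * c ^ 2 ≤ (a₀ + lam * c) ^ 2 + (a₁ + lam * c) ^ 2 := by
    have h0 := hlow₀ u
    have h1 := hlow₁ u
    have e0 : ‖B (M₀ u)‖ ^ 2 ≤ (a₀ + lam * c) ^ 2 := by
      apply pow_le_pow_left₀ (norm_nonneg _) hb₀
    have e1 : ‖B (M₁ u)‖ ^ 2 ≤ (a₁ + lam * c) ^ 2 := by
      apply pow_le_pow_left₀ (norm_nonneg _) hb₁
    nlinarith [hpu]
  -- a₀ + a₁ ≤ √2 t
  have hsum : a₀ + a₁ ≤ Real.sqrt 2 * t := by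
    have hr2 : (Real.sqrt 2) ^ 2 = 2 := Real.sq_sqrt (by norm_num)
    have h2 : (a₀ + a₁) ^ 2 ≤ (Real.sqrt 2 * t) ^ 2 := by
      rw [mul_pow, hr2]
      nlinarith [hpBu, sq_nonneg (a₀ - a₁)]
    calc a₀ + a₁ = Real.sqrt ((a₀ + a₁) ^ 2) := (Real.sqrt_sq (by positivity)).symm
      _ ≤ Real.sqrt ((Real.sqrt 2 * t) ^ 2) := Real.sqrt_le_sqrt h2
      _ = Real.sqrt 2 * t := Real.sqrt_sq (by positivity)
  set r := Real.sqrt 2 with hrdef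
  have hr0 : 0 ≤ r := Real.sqrt_nonneg 2
  have hr2 : r ^ 2 = 2 := Real.sq_sqrt (by norm_num)
  have hrlt : r < 2 := by nlinarith
  have main : m * c ^ 2 ≤ t ^ 2 + 2 * r * lam * c * t + 2 * lam ^ 2 * c ^ 2 := by
    have h3 : 2 * (lam * c) * (a₀ + a₁) ≤ 2 * (lam * c) * (r * t) := by
      have : 0 ≤ lam * c := mul_nonneg hlam hc0
      nlinarith [hsum]
    nlinarith [hmc, hpBu]
  set s := Real.sqrt (m + 2 * lam ^ 2) with hsdef
  have hs0 : 0 ≤ s := Real.sqrt_nonneg _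
  have hs2 : s ^ 2 = m + 2 * lam ^ 2 := Real.sq_sqrt (by positivity)
  by_contra hcon
  push_neg at hcon
  have h1 : 0 < (s - 2 * lam) * c := lt_of_le_of_lt ht0 hcon
  have hcpos : 0 < c := by
    rcases hc0.lt_or_eq with h | h
    · exact h
    · rw [← h, mul_zero] at h1; exact absurd h1 (lt_irrefl 0)
  have hslam : 2 * lam < s := by nlinarith
  have ht2 : t * t < ((s - 2 * lam) * c) * ((s - 2 * lam) * c) :=
    mul_self_lt_mul_self ht0 hcon
  have hcross : 2 * r * lam * c * t ≤ 2 * r * lam * c * ((s - 2 * lam) * c) := by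
    have : 0 ≤ 2 * r * lam * c := by positivity
    exact mul_le_mul_of_nonneg_left hcon.le this
  nlinarith [main, hs2, ht2, hcross, mul_pos hcpos hcpos,
    mul_nonneg (mul_nonneg hlam (sub_pos.mpr hslam).le) (mul_pos hcpos hcpos).le,
    mul_nonneg (mul_nonneg hlam ((sub_pos.mpr hrlt).le)) (mul_pos hcpos hcpos).le,
    mul_nonneg hlam (mul_pos hcpos hcpos).le]
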